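/- With notation as in the previous statement, the operator $D \colon \mathcal{O}[T] \to \mathcal{O}[T]$, $D(\sum_k g_k T^k) = \sum_k (x g_k' + (k+1) g_{k+1}) T^k$, is surjective: for every $h = \sum_k h_k T^k \in \mathcal{O}[T]$ there exists $g \in \mathcal{O}[T]$ with $Dg = h$. -/

import Mathlib

open Filter

open scoped Topology NNReal ENNReal in
/-- Primitive lemma: if `f` is analytic at `0` with `f 0 = 0`, then for every constant `c`
there is `g` analytic at `0` with `g 0 = c` and `x * g'(x) = f(x)` near `0`. -/
lemma log_solve_exists (f : ℂ → ℂ) (hf : AnalyticAt ℂ f 0) (hf0 : f 0 = 0) (c : ℂ) :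
    ∃ g : ℂ → ℂ, AnalyticAt ℂ g 0 ∧ g 0 = c ∧
      (fun x : ℂ => x * deriv g x) =ᶠ[nhds 0] f := by
  obtain ⟨p, hp⟩ := hf
  obtain ⟨r, hr0, hrlt⟩ : ∃ r : ℝ≥0, 0 < (r : ℝ≥0∞) ∧ (r : ℝ≥0∞) < p.radius :=
    ENNReal.lt_iff_exists_nnreal_btwn.mp hp.radius_pos
  have hr0' : (0:ℝ) < r := by exact_mod_cast hr0
  obtain ⟨a, ha⟩ : ∃ a : ℕ → ℂ, a = p.coeff := ⟨_, rfl⟩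
  have ha0 : a 0 = 0 := by
    have h1 := hp.coeff_zero (fun _ => (1:ℂ))
    rw [hf0] at h1
    rw [ha]
    exact h1
  have hsum : Summable fun n => ‖a n‖ * (r:ℝ) ^ n := by
    have := p.summable_norm_mul_pow hrlt
    simpa [ha, FormalMultilinearSeries.norm_apply_eq_norm_coef] using this
  -- summable bound for the derivatives
  have hu : Summable fun n => ‖a (n+1)‖ * (r:ℝ) ^ n := by
    have h1 : Summable fun n => ‖a (n+1)‖ * (r:ℝ) ^ (n+1) :=
      (summable_nat_add_iff (f := fun n => ‖a n‖ * (r:ℝ) ^ n) 1).2 hsum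
    have := h1.mul_right ((r:ℝ))⁻¹
    apply this.congr
    intro n
    field_simp [pow_succ]
    ring
  set T : ℂ → ℂ := fun z => ∑' n, (a (n+1) / ((n:ℂ)+1)) * z ^ (n+1) with hT
  set S : ℂ → ℂ := fun y => ∑' n, a (n+1) * y ^ n with hS
  have hderiv : ∀ (n : ℕ) (y : ℂ), y ∈ Metric.ball (0:ℂ) r →
      HasDerivAt (fun z : ℂ => (a (n+1) / ((n:ℂ)+1)) * z ^ (n+1)) (a (n+1) * y ^ n) y := by
    intro n y _
    have := (hasDerivAt_pow (n+1) y).const_mul (a (n+1) / ((n:ℂ)+1))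
    convert this using 1
    have hn : ((n:ℂ)+1) ≠ 0 := Nat.cast_add_one_ne_zero n
    rotate_left 2
    · rw [Nat.add_sub_cancel]; push_cast; field_simp
    all_goals rfl
  have hbound : ∀ (n : ℕ) (y : ℂ), y ∈ Metric.ball (0:ℂ) r →
      ‖a (n+1) * y ^ n‖ ≤ ‖a (n+1)‖ * (r:ℝ) ^ n := by
    intro n y hy
    rw [norm_mul, norm_pow]
    gcongr
    exact le_of_lt (by simpa using hy)
  have h0 : Summable fun n => (a (n+1) / ((n:ℂ)+1)) * (0:ℂ) ^ (n+1) := by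
    apply summable_of_ne_finset_zero (s := ∅)
    intro n _
    simp
  have hTd : ∀ y ∈ Metric.ball (0:ℂ) r, HasDerivAt T (S y) y := by
    intro y hy
    exact hasDerivAt_tsum_of_isPreconnected hu Metric.isOpen_ball
      (convex_ball (0:ℂ) (r:ℝ)).isPreconnected hderiv hbound
      (Metric.mem_ball_self hr0') h0 hy
  refine ⟨fun z => c + T z, ?_, ?_, ?_⟩
  · have hdiff : DifferentiableOn ℂ (fun z => c + T z) (Metric.ball (0:ℂ) r) := by
      intro y hy
      exact (((hTd y hy).const_add c).differentiableAt).differentiableWithinAt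
    exact hdiff.analyticAt (Metric.isOpen_ball.mem_nhds (Metric.mem_ball_self hr0'))
  · simp [hT]
  · have hev := hasFPowerSeriesAt_iff.mp hp
    filter_upwards [hev, Metric.ball_mem_nhds (0:ℂ) hr0'] with y hsumy hy
    have hd : deriv (fun z => c + T z) y = S y := ((hTd y hy).const_add c).deriv
    rw [hd]
    -- `f y` as a sum over shifted indices
    have hsy : HasSum (fun n => y ^ (n+1) • a (n+1)) (f y) := by
      have h2 := (hasSum_nat_add_iff' 1).2 (by simpa using hsumy)
      rw [ha] at ha0 ⊢
      simpa [ha0, smul_eq_mul] using h2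
    have : y * S y = ∑' n, a (n+1) * y ^ (n+1) := by
      rw [hS, ← tsum_mul_left]
      congr 1
      funext n
      ring
    rw [this]
    have := hsy.tsum_eq
    simp only [smul_eq_mul] at this
    rw [← this]
    congr 1
    funext n
    ring

open scoped Classical in
/-- Choice-based solution operator for `x g' = f`. -/
noncomputable def logSolve (f : ℂ → ℂ) (c : ℂ) : ℂ → ℂ :=
  if hf : AnalyticAt ℂ f 0 ∧ f 0 = 0 then
    (log_solve_exists f hf.1 hf.2 c).choose else 0

lemma logSolve_spec {f : ℂ → ℂ} (hf : AnalyticAt ℂ f 0) (hf0 : f 0 = 0) (c : ℂ) :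
    AnalyticAt ℂ (logSolve f c) 0 ∧ logSolve f c 0 = c ∧
      (fun x : ℂ => x * deriv (logSolve f c) x) =ᶠ[nhds 0] f := by
  have hfp : AnalyticAt ℂ f 0 ∧ f 0 = 0 := ⟨hf, hf0⟩
  rw [logSolve, dif_pos hfp]
  exact (log_solve_exists f hfp.1 hfp.2 c).choose_spec

/-- Constants used in the descending recursion. -/
noncomputable def logCC (h : ℕ → ℂ → ℂ) (k : ℕ) : ℂ :=
  if k = 0 then 0 else h (k-1) 0 / (k : ℂ)

/-- `logG h N m` is the coefficient `g_{N-m}` of the solution. -/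
noncomputable def logG (h : ℕ → ℂ → ℂ) (N : ℕ) : ℕ → ℂ → ℂ
  | 0 => fun _ => logCC h N
  | m+1 => logSolve
      (fun x => h (N - m - 1) x - ((N - m - 1 : ℕ) + 1 : ℂ) * logG h N m x)
      (logCC h (N - m - 1))

open Filter

/-- One-variable log Poincaré lemma, surjectivity: the logarithmic differential
`D(∑ g_k T^k) = ∑ (x g_k' + (k+1) g_{k+1}) T^k` on polynomials in `T = log x` with
holomorphic germ coefficients is surjective. -/
theorem log_poincare_surjective (h : ℕ → ℂ → ℂ)
    (hfin : ∃ N, ∀ k, N ≤ k → h k = 0)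
    (han : ∀ k, AnalyticAt ℂ (h k) 0) :
    ∃ g : ℕ → ℂ → ℂ,
      (∃ N, ∀ k, N ≤ k → g k = 0) ∧
      (∀ k, AnalyticAt ℂ (g k) 0) ∧
      (∀ k, (fun x : ℂ => x * deriv (g k) x + ((k : ℂ) + 1) * g (k + 1) x)
        =ᶠ[nhds (0:ℂ)] h k) := by
  obtain ⟨N₀, hN₀⟩ := hfin
  obtain ⟨N, hN1, hzero⟩ : ∃ N, 1 ≤ N ∧ ∀ k, N ≤ k → h k = 0 :=
    ⟨max N₀ 1, le_max_right _ _, fun k hk => hN₀ k (le_trans (le_max_left _ _) hk)⟩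
  -- key induction on the recursively defined coefficients
  have key : ∀ m, m ≤ N → AnalyticAt ℂ (logG h N m) 0 ∧ logG h N m 0 = logCC h (N - m) := by
    intro m
    induction m with
    | zero => intro _; exact ⟨analyticAt_const, by rw [Nat.sub_zero]; rfl⟩
    | succ m ih =>
      intro hm
      obtain ⟨hA, hB⟩ := ih (Nat.le_of_succ_le hm)
      have hk1 : N - m = (N - m - 1) + 1 := by omega
      have hfan : AnalyticAt ℂ
          (fun x => h (N - m - 1) x - ((N - m - 1 : ℕ) + 1 : ℂ) * logG h N m x) 0 :=
        (han (N - m - 1)).sub (analyticAt_const.mul hA)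
      have hf0 : (fun x => h (N - m - 1) x - ((N - m - 1 : ℕ) + 1 : ℂ) * logG h N m x) 0 = 0 := by
        have hne : ((N - m - 1 : ℕ) + 1 : ℂ) ≠ 0 := Nat.cast_add_one_ne_zero _
        have hB' : logG h N m 0 = logCC h ((N - m - 1) + 1) := by rw [hB]; congr 1
        simp only [hB', logCC, if_neg (Nat.succ_ne_zero _), Nat.add_sub_cancel]
        push_cast
        field_simp
        ring
      have hs := logSolve_spec hfan hf0 (logCC h (N - m - 1))
      refine ⟨?_, ?_⟩
      · simpa only [logG] using hs.1
      · have : N - (m+1) = N - m - 1 := by omega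
        rw [this]
        simpa only [logG] using hs.2.1
  refine ⟨fun k => if k ≤ N then logG h N (N - k) else 0, ⟨N + 1, fun k hk => ?_⟩, fun k => ?_, fun k => ?_⟩
  · beta_reduce
    rw [if_neg (by omega)]
  · beta_reduce
    by_cases hk : k ≤ N
    · rw [if_pos hk]; exact (key _ (by omega)).1
    · rw [if_neg hk]; exact analyticAt_const
  · beta_reduce
    rcases lt_trichotomy k N with hk | hk | hk
    · -- main case k < N : use the solve equation
      have hm : N - k = (N - k - 1) + 1 := by omega
      have hgk : (if k ≤ N then logG h N (N - k) else 0)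
          = logSolve (fun x => h (N - (N - k - 1) - 1) x
              - ((N - (N - k - 1) - 1 : ℕ) + 1 : ℂ) * logG h N (N - k - 1) x)
            (logCC h (N - (N - k - 1) - 1)) := by
        rw [if_pos (le_of_lt hk), hm]
        simp only [logG, Nat.add_sub_cancel]
      have hkk : N - (N - k - 1) - 1 = k := by omega
      rw [hkk] at hgk
      have hgk1 : (if k + 1 ≤ N then logG h N (N - (k+1)) else 0) = logG h N (N - k - 1) := by
        rw [if_pos (by omega)]
        congr 1 <;> omega
      obtain ⟨hA, hB⟩ := key (N - k - 1) (by omega)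
      have hfan : AnalyticAt ℂ
          (fun x => h k x - ((k : ℕ) + 1 : ℂ) * logG h N (N - k - 1) x) 0 :=
        (han k).sub (analyticAt_const.mul hA)
      have hf0 : (fun x => h k x - ((k : ℕ) + 1 : ℂ) * logG h N (N - k - 1) x) 0 = 0 := by
        have h1 : N - (N - k - 1) = k + 1 := by omega
        have hne : ((k : ℕ) + 1 : ℂ) ≠ 0 := Nat.cast_add_one_ne_zero _
        simp only [hB, h1, logCC, if_neg (Nat.succ_ne_zero _), Nat.add_sub_cancel]
        push_cast
        field_simp
        ring
      have hs := logSolve_spec hfan hf0 (logCC h k)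
      rw [hgk, hgk1]
      filter_upwards [hs.2.2] with x hx
      rw [hx]
      ring
    · -- case k = N : top coefficient is a constant
      subst hk
      have hg1 : (if k + 1 ≤ k then logG h k (k - (k+1)) else 0) = 0 := by
        rw [if_neg (by omega)]
      have hg0 : (if k ≤ k then logG h k (k - k) else 0) = fun _ => logCC h k := by
        rw [if_pos le_rfl, Nat.sub_self]
        rfl
      rw [hg0, hg1, hzero k le_rfl]
      apply Eventually.of_forall
      intro x
      simp [Pi.zero_def]
    · -- case k > N : everything vanishes
      rw [if_neg (by omega), if_neg (by omega), hzero k (le_of_lt hk)]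
      apply Eventually.of_forall
      intro x
      simp [Pi.zero_def]
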